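/- arXiv:1703.09377 — 2 statements merged into one kernel-verified Lean document; each statement's English description precedes it below -/
import Mathlib

section
/- If κ > λₘₐₓ(L)²/(2 λ₂(L)²) for a connected graph Laplacian L, then the block matrix [[2κ λ₂(L) I, L], [L, λ₂(L) I]] (with blocks of size n×n) is positive definite. -/
open Matrix

/-- μ is an eigenvalue of the real matrix L. -/
def IsEigenvalue {n : ℕ} (L : Matrix (Fin n) (Fin n) ℝ) (μ : ℝ) : Prop :=
  ∃ v : Fin n → ℝ, v ≠ 0 ∧ L.mulVec v = μ • v

/-- Pure arithmetic core: positivity of a 2×2-style quadratic bound. -/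
lemma quad_aux {c m M A B t : ℝ} (hc : 0 < c) (hm : 0 < m) (hcm : M ^ 2 < c * m)
    (hA : 0 ≤ A) (hB : 0 ≤ B) (hAB : 0 < A + B) (ht : t ^ 2 ≤ M ^ 2 * (A * B)) :
    0 < c * A + 2 * t + m * B := by
  rcases eq_or_lt_of_le hA with hA0 | hA0
  · have hA0' := hA0.symm; subst hA0'
    have hB0 : 0 < B := by linarith
    have h2 : t ^ 2 ≤ 0 := by simpa using ht
    have ht0 : t = 0 := by nlinarith [sq_nonneg t]
    nlinarith
  rcases eq_or_lt_of_le hB with hB0 | hB0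
  · have hB0' := hB0.symm; subst hB0'
    have h2 : t ^ 2 ≤ 0 := by simpa using ht
    have ht0 : t = 0 := by nlinarith [sq_nonneg t]
    nlinarith
  by_contra hcon
  push_neg at hcon
  have hs : 0 < c * A + m * B := by nlinarith
  have h4 : (c * A + m * B) * (c * A + m * B) ≤ (-2 * t) * (-2 * t) :=
    mul_self_le_mul_self hs.le (by linarith)
  nlinarith [h4, sq_nonneg (c * A - m * B), mul_pos hA0 hB0, hcm, ht]

/-- Cauchy–Schwarz for real dot products. -/
lemma dot_cs {n : ℕ} (a b : Fin n → ℝ) : (a ⬝ᵥ b) ^ 2 ≤ (a ⬝ᵥ a) * (b ⬝ᵥ b) := by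
  have h := Finset.sum_mul_sq_le_sq_mul_sq Finset.univ a b
  simpa [dotProduct, pow_two] using h

lemma dot_self_nonneg {n : ℕ} (a : Fin n → ℝ) : 0 ≤ a ⬝ᵥ a :=
  Finset.sum_nonneg fun i _ => mul_self_nonneg _

/-- If κ > λmax(L)²/(2 λ₂(L)²) for a connected graph Laplacian L, the block
matrix [[2κλ₂ I, L],[L, λ₂ I]] is positive definite. -/
theorem block_matrix_posdef {n : ℕ} (G : SimpleGraph (Fin n))
    [DecidableRel G.Adj] (hG : G.Connected)
    (μ₂ μmax : ℝ)
    (hμ₂eig : IsEigenvalue (G.lapMatrix ℝ) μ₂) (hμ₂ne : μ₂ ≠ 0)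
    (hμ₂min : ∀ μ : ℝ, IsEigenvalue (G.lapMatrix ℝ) μ → μ ≠ 0 → μ₂ ≤ μ)
    (hμmaxeig : IsEigenvalue (G.lapMatrix ℝ) μmax)
    (hμmax : ∀ μ : ℝ, IsEigenvalue (G.lapMatrix ℝ) μ → μ ≤ μmax)
    (κ : ℝ) (hκpos : 0 < κ) (hκ : κ > μmax ^ 2 / (2 * μ₂ ^ 2)) :
    (Matrix.fromBlocks ((2 * κ * μ₂) • (1 : Matrix (Fin n) (Fin n) ℝ))
      (G.lapMatrix ℝ) (G.lapMatrix ℝ) (μ₂ • (1 : Matrix (Fin n) (Fin n) ℝ))).PosDef := by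
  set L : Matrix (Fin n) (Fin n) ℝ := G.lapMatrix ℝ with hLdef
  have hPSD : L.PosSemidef := SimpleGraph.posSemidef_lapMatrix ℝ G
  have hL : L.IsHermitian := hPSD.1
  have hSym : Lᵀ = L := SimpleGraph.isSymm_lapMatrix (G := G) (R := ℝ)
  -- μ₂ > 0
  have hμ₂pos : 0 < μ₂ := by
    obtain ⟨w, hw0, hw⟩ := hμ₂eig
    have hww : 0 < w ⬝ᵥ w := by
      rcases lt_or_eq_of_le (dot_self_nonneg w) with h | h
      · exact h
      · exact absurd (dotProduct_self_eq_zero.mp h.symm) hw0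
    have h0 : 0 ≤ μ₂ * (w ⬝ᵥ w) := by
      have h1 := hPSD.dotProduct_mulVec_nonneg w
      rw [star_trivial, hw, dotProduct_smul, smul_eq_mul] at h1
      exact h1
    rcases hμ₂ne.lt_or_gt with h | h
    · nlinarith
    · exact h
  -- eigenvalues from the spectral decomposition are eigenvalues in our sense
  have heig : ∀ i, IsEigenvalue L (hL.eigenvalues i) := by
    intro i
    refine ⟨⇑(hL.eigenvectorBasis i), ?_, hL.mulVec_eigenvectorBasis i⟩
    intro h
    apply hL.eigenvectorBasis.orthonormal.ne_zero i
    ext j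
    exact congrFun h j
  have hub : ∀ i, hL.eigenvalues i ≤ μmax := fun i => hμmax _ (heig i)
  have hnn : ∀ i, 0 ≤ hL.eigenvalues i := fun i => hPSD.eigenvalues_nonneg i
  -- spectral decomposition and the operator-norm bound
  set U : Matrix (Fin n) (Fin n) ℝ := (hL.eigenvectorUnitary : Matrix (Fin n) (Fin n) ℝ)
    with hUdef
  have hU1 : U * star U = 1 := mem_unitaryGroup_iff.mp hL.eigenvectorUnitary.2
  have hU2 : star U * U = 1 := mem_unitaryGroup_iff'.mp hL.eigenvectorUnitary.2
  have hspec : L = U * diagonal hL.eigenvalues * star U := by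
    have h := hL.spectral_theorem
    simpa [RCLike.ofReal_real_eq_id, Function.comp] using h
  have hDD : diagonal hL.eigenvalues * diagonal hL.eigenvalues
      = diagonal (fun i => hL.eigenvalues i ^ 2) := by
    rw [diagonal_mul_diagonal]; congr 1; funext i; ring
  have hLL : L * L = U * diagonal (fun i => hL.eigenvalues i ^ 2) * star U := by
    conv_lhs => rw [hspec]
    rw [mul_assoc (U * diagonal hL.eigenvalues) (star U) _,
      mul_assoc U (diagonal hL.eigenvalues) (star U),
      ← mul_assoc (star U) U (diagonal hL.eigenvalues * star U), hU2, one_mul,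
      mul_assoc U (diagonal hL.eigenvalues) (diagonal hL.eigenvalues * star U),
      ← mul_assoc (diagonal hL.eigenvalues) (diagonal hL.eigenvalues) (star U), hDD,
      ← mul_assoc]
  have h1 : μmax ^ 2 • (1 : Matrix (Fin n) (Fin n) ℝ)
      = U * diagonal (fun _ : Fin n => μmax ^ 2) * star U := by
    rw [← smul_one_eq_diagonal, mul_smul_comm, mul_one, smul_mul_assoc, hU1]
  have hrw : μmax ^ 2 • (1 : Matrix (Fin n) (Fin n) ℝ) - L * L
      = U * diagonal (fun i => μmax ^ 2 - hL.eigenvalues i ^ 2) * star U := by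
    rw [h1, hLL, ← sub_mul, ← Matrix.mul_sub, ← diagonal_sub]
  have hkey : (μmax ^ 2 • (1 : Matrix (Fin n) (Fin n) ℝ) - L * L).PosSemidef := by
    rw [hrw]
    have hd : (diagonal (fun i => μmax ^ 2 - hL.eigenvalues i ^ 2)
        : Matrix (Fin n) (Fin n) ℝ).PosSemidef := by
      refine Matrix.PosSemidef.diagonal ?_
      intro i
      have := hnn i; have := hub i
      simp only [Pi.zero_apply]
      nlinarith
    simpa [star_eq_conjTranspose] using hd.mul_mul_conjTranspose_same U
  have hLnorm : ∀ v : Fin n → ℝ, (L *ᵥ v) ⬝ᵥ (L *ᵥ v) ≤ μmax ^ 2 * (v ⬝ᵥ v) := by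
    intro v
    have h := hkey.dotProduct_mulVec_nonneg v
    rw [star_trivial, sub_mulVec, dotProduct_sub, smul_mulVec, one_mulVec,
      dotProduct_smul, smul_eq_mul] at h
    have h2 : v ⬝ᵥ ((L * L) *ᵥ v) = (L *ᵥ v) ⬝ᵥ (L *ᵥ v) := by
      rw [← mulVec_mulVec, dotProduct_mulVec, ← mulVec_transpose, hSym]
    rw [h2] at h
    linarith
  -- assemble
  refine posDef_iff_dotProduct_mulVec.mpr ⟨?_, ?_⟩
  · rw [isHermitian_fromBlocks_iff]
    refine ⟨?_, hL, hL, ?_⟩ <;> simp [Matrix.IsHermitian]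
  · intro x hx
    rw [star_trivial]
    set u : Fin n → ℝ := fun i => x (Sum.inl i) with hu
    set v : Fin n → ℝ := fun i => x (Sum.inr i) with hv
    have hx' : x = Sum.elim u v := by ext (i | i) <;> rfl
    rw [hx', fromBlocks_mulVec, sumElim_dotProduct_sumElim]
    simp only [Sum.elim_comp_inl, Sum.elim_comp_inr]
    have hd1 : u ⬝ᵥ (((2 * κ * μ₂) • (1 : Matrix (Fin n) (Fin n) ℝ)) *ᵥ u + L *ᵥ v)
        = 2 * κ * μ₂ * (u ⬝ᵥ u) + u ⬝ᵥ (L *ᵥ v) := by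
      rw [dotProduct_add, smul_mulVec, one_mulVec, dotProduct_smul, smul_eq_mul]
    have hd2 : v ⬝ᵥ (L *ᵥ u + (μ₂ • (1 : Matrix (Fin n) (Fin n) ℝ)) *ᵥ v)
        = u ⬝ᵥ (L *ᵥ v) + μ₂ * (v ⬝ᵥ v) := by
      rw [dotProduct_add, smul_mulVec, one_mulVec, dotProduct_smul, smul_eq_mul]
      congr 1
      rw [dotProduct_mulVec, ← mulVec_transpose, hSym, dotProduct_comm]
    rw [hd1, hd2]
    have hA : 0 ≤ u ⬝ᵥ u := dot_self_nonneg u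
    have hB : 0 ≤ v ⬝ᵥ v := dot_self_nonneg v
    have hAB : 0 < u ⬝ᵥ u + v ⬝ᵥ v := by
      by_cases hu0 : u = 0
      · have hv0 : v ≠ 0 := by
          intro hv0
          apply hx
          rw [hx', hu0, hv0]
          ext (i | i) <;> rfl
        have : 0 < v ⬝ᵥ v :=
          lt_of_le_of_ne hB fun h => hv0 (dotProduct_self_eq_zero.mp h.symm)
        linarith
      · have : 0 < u ⬝ᵥ u :=
          lt_of_le_of_ne hA fun h => hu0 (dotProduct_self_eq_zero.mp h.symm)
        linarith
    have ht : (u ⬝ᵥ (L *ᵥ v)) ^ 2 ≤ μmax ^ 2 * ((u ⬝ᵥ u) * (v ⬝ᵥ v)) := by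
      nlinarith [dot_cs u (L *ᵥ v), hLnorm v, hA, dot_self_nonneg (L *ᵥ v)]
    have hcm : μmax ^ 2 < 2 * κ * μ₂ * μ₂ := by
      rw [gt_iff_lt, div_lt_iff₀ (by positivity)] at hκ
      nlinarith
    have hcpos : 0 < 2 * κ * μ₂ := by positivity
    have := quad_aux hcpos hμ₂pos hcm hA hB hAB ht
    linarith
end

section
/- Let L be the Laplacian of a connected graph on n nodes, restricted to the subspace S = {y ∈ ℝⁿ : 1ₙᵀ y = 0}. Consider the quadratic form V(p̃,q̃) = (1/2)[p̃ᵀ q̃ᵀ](L ⊗ [[2κ,1],[1,1]])[p̃; q̃] on S × S. If κ > max{1, λₘₐₓ(L)²/(2 λ₂(L)²)}, then V is positive definite on S × S. -/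
open Matrix

lemma lap_quad_pos {n : ℕ} (G : SimpleGraph (Fin n)) [DecidableRel G.Adj] (hG : G.Connected)
    (x : Fin n → ℝ) (hx : (fun _ => (1 : ℝ)) ⬝ᵥ x = 0) (hxne : x ≠ 0) :
    0 < x ⬝ᵥ (G.lapMatrix ℝ).mulVec x := by
  have hge : 0 ≤ x ⬝ᵥ (G.lapMatrix ℝ).mulVec x := by
    have := (SimpleGraph.posSemidef_lapMatrix ℝ G).dotProduct_mulVec_nonneg x
    simpa [star, dotProduct] using this
  rcases hge.lt_or_eq with h | h
  · exact h
  · exfalso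
    have h0 : Matrix.toLinearMap₂' ℝ (G.lapMatrix ℝ) x x = 0 := by
      rw [Matrix.toLinearMap₂'_apply']
      exact h.symm
    rw [SimpleGraph.lapMatrix_toLinearMap₂'_apply'_eq_zero_iff_forall_reachable] at h0
    rcases Nat.eq_zero_or_pos n with hn | hn
    · exact hxne (funext fun i => absurd i.2 (by omega))
    · have i0 : Fin n := ⟨0, hn⟩
      have hconst : ∀ i, x i = x i0 := fun i => h0 i i0 (hG.preconnected i i0)
      have hsum : ∑ i, x i = 0 := by simpa [dotProduct] using hx
      have : (n : ℝ) * x i0 = 0 := by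
        rw [← hsum, Finset.sum_congr rfl fun i _ => hconst i]
        simp [mul_comm]
      have hx0 : x i0 = 0 := by
        have hn' : (n : ℝ) ≠ 0 := by positivity
        exact (mul_eq_zero.mp this).resolve_left hn'
      exact hxne (funext fun i => by rw [hconst i, hx0]; rfl)

lemma lap_cauchy_schwarz {n : ℕ} (G : SimpleGraph (Fin n)) [DecidableRel G.Adj]
    (p q : Fin n → ℝ) :
    (p ⬝ᵥ (G.lapMatrix ℝ).mulVec q) ^ 2 ≤
      (p ⬝ᵥ (G.lapMatrix ℝ).mulVec p) * (q ⬝ᵥ (G.lapMatrix ℝ).mulVec q) := by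
  set L := G.lapMatrix ℝ
  have hsymm : q ⬝ᵥ L.mulVec p = p ⬝ᵥ L.mulVec q := by
    rw [dotProduct_mulVec, ← mulVec_transpose, (SimpleGraph.isSymm_lapMatrix ℝ G).eq,
      dotProduct_comm, dotProduct_mulVec]
  have key : ∀ t : ℝ, 0 ≤ (q ⬝ᵥ L.mulVec q) * (t * t)
      + (2 * (p ⬝ᵥ L.mulVec q)) * t + (p ⬝ᵥ L.mulVec p) := by
    intro t
    have h := (SimpleGraph.posSemidef_lapMatrix ℝ G).dotProduct_mulVec_nonneg (t • q + p)
    have h' : 0 ≤ (t • q + p) ⬝ᵥ L.mulVec (t • q + p) := by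
      simpa [star, dotProduct] using h
    have expand : (t • q + p) ⬝ᵥ L.mulVec (t • q + p)
        = (q ⬝ᵥ L.mulVec q) * (t * t) + (2 * (p ⬝ᵥ L.mulVec q)) * t + (p ⬝ᵥ L.mulVec p) := by
      simp only [mulVec_add, mulVec_smul, dotProduct_add, add_dotProduct,
        dotProduct_smul, smul_dotProduct, smul_eq_mul, hsymm]
      ring
    linarith [expand ▸ h']
  have hd := discrim_le_zero key
  rw [discrim] at hd
  nlinarith [hd]

/-- For κ > max{1, λmax²/(2λ₂²)}, the form
V(p̃,q̃) = (1/2)(2κ p̃ᵀLp̃ + 2 p̃ᵀLq̃ + q̃ᵀLq̃) is positive definite on the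
subspace where 1ᵀp̃ = 0 and 1ᵀq̃ = 0. -/
theorem lyapunov_form_posdef_on_subspace {n : ℕ} (G : SimpleGraph (Fin n))
    [DecidableRel G.Adj] (hG : G.Connected)
    (μ₂ μmax : ℝ)
    (hμ₂eig : IsEigenvalue (G.lapMatrix ℝ) μ₂) (hμ₂ne : μ₂ ≠ 0)
    (hμ₂min : ∀ μ : ℝ, IsEigenvalue (G.lapMatrix ℝ) μ → μ ≠ 0 → μ₂ ≤ μ)
    (hμmaxeig : IsEigenvalue (G.lapMatrix ℝ) μmax)
    (hμmax : ∀ μ : ℝ, IsEigenvalue (G.lapMatrix ℝ) μ → μ ≤ μmax)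
    (κ : ℝ) (hκ : κ > max 1 (μmax ^ 2 / (2 * μ₂ ^ 2)))
    (p q : Fin n → ℝ)
    (hp : (fun _ => (1 : ℝ)) ⬝ᵥ p = 0) (hq : (fun _ => (1 : ℝ)) ⬝ᵥ q = 0)
    (hpq : ¬(p = 0 ∧ q = 0)) :
    0 < (1 / 2) * (2 * κ * (p ⬝ᵥ (G.lapMatrix ℝ).mulVec p)
      + 2 * (p ⬝ᵥ (G.lapMatrix ℝ).mulVec q)
      + q ⬝ᵥ (G.lapMatrix ℝ).mulVec q) := by
  have hκ1 : (1 : ℝ) < κ := lt_of_le_of_lt (le_max_left _ _) hκ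
  set a := p ⬝ᵥ (G.lapMatrix ℝ).mulVec p with ha_def
  set b := p ⬝ᵥ (G.lapMatrix ℝ).mulVec q with hb_def
  set c := q ⬝ᵥ (G.lapMatrix ℝ).mulVec q with hc_def
  have hc_nonneg : 0 ≤ c := by
    have := (SimpleGraph.posSemidef_lapMatrix ℝ G).dotProduct_mulVec_nonneg q
    simpa [hc_def, star, dotProduct] using this
  have hcs : b ^ 2 ≤ a * c := lap_cauchy_schwarz G p q
  by_cases hp0 : p = 0
  · have hq0 : q ≠ 0 := fun h => hpq ⟨hp0, h⟩
    have hc : 0 < c := lap_quad_pos G hG q hq hq0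
    have ha0 : a = 0 := by simp [ha_def, hp0]
    have hb0 : b = 0 := by simp [hb_def, hp0]
    rw [ha0, hb0]
    linarith
  · have ha : 0 < a := lap_quad_pos G hG p hp hp0
    have h1 : -((a + c) / 2) ≤ b := by
      nlinarith [hcs, sq_nonneg (a - c), hc_nonneg, ha.le]
    nlinarith [ha, h1, hκ1]
end
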